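/- Let Λ ⊂ ℂ be a lattice and σ_Λ its modified Weierstrass sigma function (vanishing simply exactly on Λ). Define S_Λ^n(z) = e^{π|z|²} (d/dz)^n [ e^{−π|z|²} σ_Λ(z)^{n+1}/(n! z) ], interpreted via the Leibniz expansion S_Λ^n(z) = ∑_{k=0}^n binom(n,k)(−π z̄)^k (d/dz)^{n−k} ( σ_Λ(z)^{n+1}/(n! z) ). Then S_Λ^n interpolates the delta sequence on Λ: S_Λ^n(λ) = 1 if λ = 0 and S_Λ^n(λ) = 0 for all λ ∈ Λ \ {0}. -/

import Mathlib

open ComplexConjugate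

noncomputable section

lemma entire_deriv {f : ℂ → ℂ} (hf : Differentiable ℂ f) : Differentiable ℂ (deriv f) :=
  ((contDiff_infty_iff_deriv.mp hf.contDiff).2).differentiable (by simp)

lemma entire_iteratedDeriv {f : ℂ → ℂ} (hf : Differentiable ℂ f) (k : ℕ) :
    Differentiable ℂ (iteratedDeriv k f) := by
  induction k with
  | zero => simpa using hf
  | succ k ih => rw [iteratedDeriv_succ]; exact entire_deriv ih

/-- structure of iterated derivatives of a power -/
lemma pow_iteratedDeriv {f : ℂ → ℂ} (hf : Differentiable ℂ f) (N j : ℕ) (hj : j ≤ N) :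
    ∃ r : ℂ → ℂ, Differentiable ℂ r ∧
      iteratedDeriv j (fun z => f z ^ N) =
        fun z => (N.descFactorial j : ℂ) * (f z ^ (N - j) * deriv f z ^ j)
          + f z ^ (N - j + 1) * r z := by
  induction j with
  | zero =>
    exact ⟨fun _ => 0, differentiable_const 0, by
      funext z; simp [iteratedDeriv_zero]⟩
  | succ j ih =>
    obtain ⟨r, hr, hrel⟩ := ih (le_of_lt (Nat.lt_of_succ_le hj))
    have hf' := entire_deriv hf
    have hf'' := entire_deriv hf'
    have hr' := entire_deriv hr
    refine ⟨fun z => (N.descFactorial j : ℂ) * (j * deriv f z ^ (j - 1) * deriv (deriv f) z)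
        + ((N - j : ℕ) + 1) * deriv f z * r z + f z * deriv r z,
      by fun_prop (disch := assumption), ?_⟩
    rw [iteratedDeriv_succ, hrel]
    funext z
    have Hf : HasDerivAt f (deriv f z) z := (hf z).hasDerivAt
    have Hf' : HasDerivAt (deriv f) (deriv (deriv f) z) z := (hf' z).hasDerivAt
    have Hr : HasDerivAt r (deriv r z) z := (hr z).hasDerivAt
    have H := ((((Hf.pow (N-j)).mul (Hf'.pow j)).const_mul ((N.descFactorial j : ℂ))).add
      ((Hf.pow (N-j+1)).mul Hr))
    rw [show deriv (fun z => (N.descFactorial j : ℂ) * (f z ^ (N - j) * deriv f z ^ j) + f z ^ (N - j + 1) * r z) z = _ from H.deriv]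
    have ha1 : N - j = (N - (j+1)) + 1 := by omega
    have ha2 : N - j - 1 = N - (j+1) := by omega
    have ha3 : N - j + 1 - 1 = (N - (j+1)) + 1 := by omega
    have ha4 : j + 1 - 1 = j := by omega
    have ha5 : (N.descFactorial (j+1) : ℂ) = ((N - (j+1) : ℕ) + 1) * (N.descFactorial j : ℂ) := by
      rw [Nat.descFactorial_succ]
      push_cast [show N - j = (N - (j+1)) + 1 from ha1]
      ring
    rw [ha1, ha5]
    simp only [Nat.add_sub_cancel]
    push_cast
    simp only [Pi.pow_apply]
    ring

lemma hasDerivAt_iteratedDeriv' {G : ℂ → ℂ} (hG : Differentiable ℂ G) (m : ℕ) (z : ℂ) :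
    HasDerivAt (iteratedDeriv m G) (iteratedDeriv (m + 1) G z) z := by
  rw [iteratedDeriv_succ]
  exact (entire_iteratedDeriv hG m z).hasDerivAt

lemma mul_id_iteratedDeriv {G : ℂ → ℂ} (hG : Differentiable ℂ G) (m : ℕ) :
    iteratedDeriv (m + 1) (fun z => G z * z) =
      fun z => z * iteratedDeriv (m + 1) G z + ((m : ℂ) + 1) * iteratedDeriv m G z := by
  induction m with
  | zero =>
    funext z
    rw [iteratedDeriv_one, deriv_fun_mul (hG z) differentiableAt_fun_id]
    simp [iteratedDeriv_one, iteratedDeriv_zero]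
    ring
  | succ m ih =>
    rw [iteratedDeriv_succ, ih]
    funext z
    have H := (((hasDerivAt_id z).mul (hasDerivAt_iteratedDeriv' hG (m + 1) z)).add
      ((hasDerivAt_iteratedDeriv' hG m z).const_mul ((m : ℂ) + 1)))
    simp only [id] at H
    rw [show deriv (fun z => z * iteratedDeriv (m + 1) G z + ((m : ℂ) + 1) * iteratedDeriv m G z) z = _ from H.deriv]
    push_cast
    ring

lemma iteratedDeriv_cmul {f : ℂ → ℂ} (hf : Differentiable ℂ f) (c : ℂ) (m : ℕ) :
    iteratedDeriv m (fun z => c * f z) = fun z => c * iteratedDeriv m f z := by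
  induction m with
  | zero => simp [iteratedDeriv_zero]
  | succ m ih =>
    rw [iteratedDeriv_succ, ih, iteratedDeriv_succ]
    funext z
    rw [deriv_const_mul _ (entire_iteratedDeriv hf m z)]

/-- Let `σ_Λ` be the modified Weierstrass sigma function of the lattice `Λ = ℤλ₁ + ℤλ₂`
(vanishing simply exactly on `Λ`, with `σ_Λ'(0) = 1`), and let `G` be the entire function
with `G(z)·z = σ_Λ(z)^{n+1}`. Then
`S_Λ^n(z) = ∑_{k=0}^n C(n,k)(-π z̄)^k (d/dz)^{n-k}(σ_Λ^{n+1}/(n! z))` satisfies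
`S_Λ^n(0) = 1` and `S_Λ^n(λ) = 0` for `λ ∈ Λ \ {0}`. -/
theorem sigma_interpolates (n : ℕ) (l₁ l₂ : ℂ) (hind : LinearIndependent ℝ ![l₁, l₂])
    (σ : ℂ → ℂ) (hσ : Differentiable ℂ σ)
    (hzero : ∀ z : ℂ, σ z = 0 ↔ ∃ m₁ m₂ : ℤ, z = m₁ * l₁ + m₂ * l₂)
    (hsimple : ∀ z : ℂ, σ z = 0 → deriv σ z ≠ 0)
    (hderiv0 : deriv σ 0 = 1)
    (G : ℂ → ℂ) (hG : Differentiable ℂ G) (hGσ : ∀ z : ℂ, G z * z = σ z ^ (n + 1)) :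
    ∀ lam : ℂ, (∃ m₁ m₂ : ℤ, lam = m₁ * l₁ + m₂ * l₂) →
      (∑ k ∈ Finset.range (n + 1), (n.choose k : ℂ) * (-Real.pi * conj lam) ^ k *
          iteratedDeriv (n - k) (fun z => G z / (n.factorial : ℂ)) lam)
        = if lam = 0 then 1 else 0 := by
  intro lam hlam
  have hσlam : σ lam = 0 := (hzero lam).mpr hlam
  have hfun : (fun z => G z * z) = fun z => σ z ^ (n + 1) := funext hGσ
  have hdiv : (fun z : ℂ => G z / (n.factorial : ℂ)) = fun z => (n.factorial : ℂ)⁻¹ * G z := by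
    funext z; rw [div_eq_inv_mul]
  have hfact : (n.factorial : ℂ) ≠ 0 := Nat.cast_ne_zero.mpr n.factorial_ne_zero
  by_cases h0 : lam = 0
  · subst h0
    rw [if_pos rfl]
    rw [Finset.sum_eq_single 0]
    · -- main term
      have hDn : iteratedDeriv n G 0 = (n.factorial : ℂ) := by
        have h1 := congrFun (mul_id_iteratedDeriv hG n) 0
        rw [hfun] at h1
        obtain ⟨r, hr, hrel⟩ := pow_iteratedDeriv hσ (n + 1) (n + 1) le_rfl
        rw [congrFun hrel 0] at h1
        simp only [Nat.sub_self, Nat.descFactorial_self, pow_zero, hσlam, hderiv0, one_pow,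
          mul_one, zero_mul, zero_add, pow_one, zero_pow, mul_zero, add_zero] at h1
        have hn1 : ((n : ℂ) + 1) ≠ 0 := Nat.cast_add_one_ne_zero n
        apply mul_left_cancel₀ hn1
        rw [← h1, Nat.factorial_succ]
        push_cast
        ring
      rw [hdiv, congrFun (iteratedDeriv_cmul hG _ (n - 0)) 0]
      simp [hDn, inv_mul_cancel₀ hfact]
    · intro k hk hkne
      have : (-(Real.pi : ℂ) * conj (0 : ℂ)) ^ k = 0 := by
        rw [map_zero, mul_zero]
        exact zero_pow hkne
      simp only [this, mul_zero, zero_mul]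
    · intro h; simp at h
  · rw [if_neg h0]
    have hvan : ∀ m, m ≤ n → iteratedDeriv m G lam = 0 := by
      intro m
      induction m with
      | zero =>
        intro _
        have := hGσ lam
        rw [hσlam, zero_pow (Nat.succ_ne_zero n)] at this
        simpa [iteratedDeriv_zero] using (mul_eq_zero.mp this).resolve_right h0
      | succ m ih =>
        intro hm
        have hpow : iteratedDeriv (m + 1) (fun z => σ z ^ (n + 1)) lam = 0 := by
          obtain ⟨r, hr, hrel⟩ := pow_iteratedDeriv hσ (n + 1) (m + 1) (by omega)
          rw [congrFun hrel lam, hσlam, zero_pow (by omega : n + 1 - (m + 1) ≠ 0),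
            zero_pow (by omega : n + 1 - (m + 1) + 1 ≠ 0)]
          ring
        have h1 := congrFun (mul_id_iteratedDeriv hG m) lam
        rw [hfun, hpow, ih (by omega)] at h1
        have h2 := h1.symm
        rw [mul_zero, add_zero] at h2
        exact (mul_eq_zero.mp h2).resolve_left h0
    refine Finset.sum_eq_zero fun k hk => ?_
    rw [hdiv, congrFun (iteratedDeriv_cmul hG _ (n - k)) lam, hvan (n - k) (by omega)]
    ring
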